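/- Let U be a simple graph and let U ⊕ x denote the graph obtained from U by adding one new vertex x joined to every vertex of U. If there exists a graph homomorphism from U ⊕ x to U, then U contains an infinite set of pairwise adjacent vertices (an infinite complete subgraph). -/

import Mathlib

/-- The cone `U ⊕ x` over a graph `U`: one new vertex (`none`) joined to every
vertex of `U`, all edges of `U` kept. -/
def cone {V : Type*} (U : SimpleGraph V) : SimpleGraph (Option V) where
  Adj a b := a ≠ b ∧ ∀ u v, a = some u → b = some v → U.Adj u v
  symm := by
    constructor
    rintro a b ⟨hne, h⟩
    exact ⟨hne.symm, fun u v hb ha => (h v u ha hb).symm⟩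
  loopless := by
    constructor
    rintro a ⟨hne, -⟩
    exact hne rfl

/-- If the cone over `U` admits a homomorphism into `U`, then `U` contains an
infinite set of pairwise adjacent vertices. -/
theorem infinite_clique_of_cone_hom {V : Type*} (U : SimpleGraph V)
    (h : Nonempty (cone U →g U)) :
    ∃ S : Set V, S.Infinite ∧ S.Pairwise U.Adj := by
  obtain ⟨f⟩ := h
  -- iterate: b 0 = f none, b (n+1) = f (some (b n))
  set b : ℕ → V := fun n => Nat.rec (f none) (fun _ prev => f (some prev)) n with hb
  have hstep : ∀ n, b (n + 1) = f (some (b n)) := fun n => rfl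
  have key : ∀ n m, m < n → U.Adj (b m) (b n) := by
    intro n
    induction n using Nat.strong_induction_on with
    | _ n ih =>
      intro m hm
      match n, hm with
      | n + 1, hm =>
        rw [hstep]
        match m with
        | 0 =>
          have : (cone U).Adj none (some (b n)) :=
            ⟨by simp, fun u v hu hv => by simp at hu⟩
          exact f.map_rel this
        | m + 1 =>
          rw [hstep]
          have hadj : U.Adj (b m) (b n) := ih n (Nat.lt_succ_self n) m
            (Nat.lt_of_succ_lt_succ hm)
          have : (cone U).Adj (some (b m)) (some (b n)) := by
            refine ⟨?_, fun u v hu hv => by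
              injection hu with hu; injection hv with hv; subst hu hv; exact hadj⟩
            intro hc; injection hc with hc; exact hadj.ne hc
          exact f.map_rel this
  have hinj : Function.Injective b := by
    intro i j hij
    by_contra hne
    rcases Nat.lt_or_ge i j with h' | h'
    · exact (key j i h').ne hij
    · exact (key i j (lt_of_le_of_ne h' (Ne.symm hne))).ne hij.symm
  refine ⟨Set.range b, Set.infinite_range_of_injective hinj, ?_⟩
  rintro _ ⟨i, rfl⟩ _ ⟨j, rfl⟩ hne
  rcases Nat.lt_or_ge i j with h' | h'
  · exact key j i h'
  · exact (key i j (lt_of_le_of_ne h' fun e => hne (by rw [e]))).symm
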